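/- Let M be a binary matroid with rank function r, T ⊆ E(M), and let r' be the rank function of M'_T. If A ⊆ E(M) (so a ∉ A) and A contains a circuit C of M with |C ∩ T| odd, then r'(A) = r(A) + 1; if A contains no such circuit, then r'(A) = r(A). -/

import Mathlib

open Set

variable {α : Type*}

/-- The rank of a set `X` in a matroid `M`: the maximum size of an independent subset of `X`. -/
noncomputable def mrank (M : Matroid α) (X : Set α) : ℕ :=
  sSup {n | ∃ I, M.Indep I ∧ I ⊆ X ∧ I.ncard = n}

/-- `(A, B)` is a `k`-separation of `M`: a partition of the ground set with both sides of
size at least `k` and `r(A) + r(B) - r(M) ≤ k - 1` (written additively). -/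
def IsKSeparation (M : Matroid α) (k : ℕ) (A B : Set α) : Prop :=
  A ∪ B = M.E ∧ Disjoint A B ∧ k ≤ A.ncard ∧ k ≤ B.ncard ∧
    mrank M A + mrank M B + 1 ≤ mrank M M.E + k

/-- `M` is `n`-connected if it has no `k`-separation for any `k < n`. -/
def NConnected (M : Matroid α) (n : ℕ) : Prop :=
  ∀ k A B, 1 ≤ k → k < n → ¬ IsKSeparation M k A B

/-- A circuit is a minimal dependent set. -/
def MCircuit (M : Matroid α) (C : Set α) : Prop := Minimal M.Dep C

/-- A cocircuit is a circuit of the dual matroid. -/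
def MCocircuit (M : Matroid α) (C : Set α) : Prop := MCircuit M✶ C

/-- A loop is a dependent singleton. -/
def MLoop (M : Matroid α) (e : α) : Prop := M.Dep {e}

/-- A coloop is a loop of the dual, i.e. an element lying in every base. -/
def MColoop (M : Matroid α) (e : α) : Prop := M✶.Dep {e}

/-- `M` is the vector matroid of the family of vectors `φ` over `GF(2)`:
a set is independent iff it lies in the ground set and the corresponding
vectors are linearly independent. -/
def IsRep {W : Type*} [AddCommGroup W] [Module (ZMod 2) W] (M : Matroid α) (φ : α → W) : Prop :=
  ∀ I : Set α, M.Indep I ↔ I ⊆ M.E ∧ LinearIndependent (ZMod 2) (I.restrict φ)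

open scoped Classical in
/-- The columns of the element splitting matrix `A'_T`: each original column gets an extra
coordinate (the new row), equal to `1` exactly on the columns labelled by `T`, and a new
column `a` which is `1` in the new row and `0` elsewhere. -/
noncomputable def splitRep {W : Type*} [AddCommGroup W] [Module (ZMod 2) W]
    (φ : α → W) (T : Set α) (a : α) : α → W × ZMod 2 :=
  fun x => if x = a then (0, 1) else (φ x, if x ∈ T then 1 else 0)

/-- `N` is the element splitting matroid `M'_T` of the binary matroid `M` (represented by `φ`)
with respect to `T`, with new element `a`. -/
def IsEleSplit {W : Type*} [AddCommGroup W] [Module (ZMod 2) W]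
    (M : Matroid α) (φ : α → W) (T : Set α) (a : α) (N : Matroid α) : Prop :=
  a ∉ M.E ∧ N.E = insert a M.E ∧ IsRep N (splitRep φ T a)

/-- `M` is the contraction `N / a` of the single element `a` from `N`. -/
def ContractElemEq (N : Matroid α) (a : α) (M : Matroid α) : Prop :=
  M.E = N.E \ {a} ∧ ∀ I : Set α,
    M.Indep I ↔ a ∉ I ∧
      ((N.Indep {a} ∧ N.Indep (insert a I)) ∨ (¬ N.Indep {a} ∧ N.Indep I))


open Module Submodule

private lemma zmod2_cases (x : ZMod 2) : x = 0 ∨ x = 1 := by revert x; decide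

private lemma odd_iff_cast_eq_one (n : ℕ) : Odd n ↔ (n : ZMod 2) = 1 := by
  rw [Nat.odd_iff]
  constructor
  · intro h; rw [← ZMod.natCast_mod n 2, h]; norm_num
  · intro h
    rcases Nat.mod_two_eq_zero_or_one n with h0 | h1
    · rw [← ZMod.natCast_mod n 2, h0] at h; simp at h
    · exact h1

section Helpers

variable {W : Type*} [AddCommGroup W] [Module (ZMod 2) W] {M : Matroid α} {φ : α → W}

private lemma dep_of_sum_eq_zero (hM : IsRep M φ) {S : Finset α} (hSE : ↑S ⊆ M.E)
    (hne : S.Nonempty) (hsum : ∑ x ∈ S, φ x = 0) : M.Dep (↑S : Set α) := by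
  rw [Matroid.dep_iff]
  refine ⟨fun hI => ?_, hSE⟩
  have hli := ((hM _).1 hI).2
  rw [linearIndependent_iff'] at hli
  obtain ⟨x, hx⟩ := hne
  refine one_ne_zero (hli Finset.univ (fun _ => 1) ?_ ⟨x, by simpa using hx⟩ (Finset.mem_univ _))
  have h1 : ∑ i : (↑S : Set α), (1 : ZMod 2) • (↑S : Set α).restrict φ i
      = ∑ i : (↑S : Set α), φ ↑i := by
    simp [Set.restrict]
  rw [h1, Finset.sum_finset_coe, hsum]

private lemma exists_sum_zero_of_dep (hM : IsRep M φ) {S : Finset α} (hdep : M.Dep ↑S) :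
    ∃ S' : Finset α, S' ⊆ S ∧ S'.Nonempty ∧ ∑ x ∈ S', φ x = 0 := by
  classical
  rw [Matroid.dep_iff] at hdep
  have hni : ¬ LinearIndependent (ZMod 2) ((↑S : Set α).restrict φ) := by
    intro h; exact hdep.1 ((hM _).2 ⟨hdep.2, h⟩)
  rw [linearIndependent_iff'] at hni
  push_neg at hni
  obtain ⟨s, g, hsum, i, his, hgi⟩ := hni
  refine ⟨(s.filter (fun j => g j ≠ 0)).image Subtype.val, ?_, ?_, ?_⟩
  · intro x hx
    simp only [Finset.mem_image] at hx
    obtain ⟨j, _, rfl⟩ := hx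
    exact Finset.mem_coe.mp j.2
  · exact ⟨↑i, Finset.mem_image.mpr ⟨i, Finset.mem_filter.mpr ⟨his, hgi⟩, rfl⟩⟩
  · rw [Finset.sum_image (f := fun j => φ j) (by intro x _ y _ h; exact Subtype.ext h)]
    have h2 : ∀ j ∈ s.filter (fun j => g j ≠ 0), φ (j : α) = g j • (↑S : Set α).restrict φ j := by
      intro j hj
      rcases zmod2_cases (g j) with h0 | h1
      · exact absurd h0 (Finset.mem_filter.mp hj).2
      · simp [h1, Set.restrict]
    rw [Finset.sum_congr rfl h2, ← hsum]
    exact Finset.sum_filter_of_ne (by intro j _ h h0; exact h (by simp [h0]))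

private lemma circuit_sum_zero (hM : IsRep M φ) {C : Set α} (hC : MCircuit M C)
    (hCfin : C.Finite) : ∑ x ∈ hCfin.toFinset, φ x = 0 := by
  have hdep : M.Dep ↑hCfin.toFinset := by rw [Set.Finite.coe_toFinset]; exact hC.1
  obtain ⟨S', hS'sub, hS'ne, hS'sum⟩ := exists_sum_zero_of_dep hM hdep
  have hS'C : (↑S' : Set α) ⊆ C := by
    intro x hx
    rw [← hCfin.coe_toFinset]
    exact hS'sub hx
  have hdep' : M.Dep ↑S' := dep_of_sum_eq_zero hM (hS'C.trans hC.1.subset_ground) hS'ne hS'sum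
  have hCS' : C ⊆ ↑S' := hC.2 hdep' hS'C
  have hEq : S' = hCfin.toFinset := by
    apply Finset.coe_injective
    rw [hCfin.coe_toFinset]
    exact Set.Subset.antisymm hS'C hCS'
  rwa [← hEq]

private lemma exists_circuit_of_dep {M : Matroid α} :
    ∀ n {S : Set α}, S.Finite → S.ncard ≤ n → M.Dep S → ∃ C ⊆ S, MCircuit M C := by
  intro n
  induction n with
  | zero =>
    intro S hS hcard hdep
    rw [Nat.le_zero, Set.ncard_eq_zero hS] at hcard
    subst hcard
    exact absurd M.empty_indep (Matroid.dep_iff.mp hdep).1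
  | succ n ih =>
    intro S hS hcard hdep
    by_cases hmin : ∀ D, M.Dep D → D ⊆ S → S ⊆ D
    · exact ⟨S, Set.Subset.rfl, hdep, fun D hD hDS => hmin D hD hDS⟩
    · push_neg at hmin
      obtain ⟨D, hDdep, hDS, hnsub⟩ := hmin
      have hssub : D ⊂ S := ssubset_of_subset_not_subset hDS hnsub
      have hlt : D.ncard < S.ncard := Set.ncard_lt_ncard hssub hS
      obtain ⟨C, hCD, hC⟩ := ih (hS.subset hDS) (by omega) hDdep
      exact ⟨C, hCD.trans hDS, hC⟩

end Helpers

section Helpers2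

variable {W : Type*} [AddCommGroup W] [Module (ZMod 2) W] {M : Matroid α} {φ : α → W}

private lemma exists_odd_circuit (hM : IsRep M φ) (T : Set α) :
    ∀ n (S : Finset α), S.card ≤ n → ↑S ⊆ M.E → S.Nonempty → ∑ x ∈ S, φ x = 0 →
      Odd (((↑S : Set α) ∩ T).ncard) →
      ∃ C ⊆ (↑S : Set α), MCircuit M C ∧ Odd ((C ∩ T).ncard) := by
  intro n
  induction n with
  | zero =>
    intro S hc _ hne _ _
    rw [Nat.le_zero, Finset.card_eq_zero] at hc
    simp [hc] at hne
  | succ n ih =>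
    intro S hc hE hne hsum hodd
    classical
    have hdep : M.Dep ↑S := dep_of_sum_eq_zero hM hE hne hsum
    obtain ⟨C, hCS, hC⟩ := exists_circuit_of_dep (↑S : Set α).ncard S.finite_toSet le_rfl hdep
    have hCfin : C.Finite := S.finite_toSet.subset hCS
    have hCsum := circuit_sum_zero hM hC hCfin
    have hCne : C.Nonempty := by
      rw [Set.nonempty_iff_ne_empty]
      rintro rfl
      exact (Matroid.dep_iff.mp hC.1).1 M.empty_indep
    by_cases hCodd : Odd ((C ∩ T).ncard)
    · exact ⟨C, hCS, hC, hCodd⟩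
    · set S' := S \ hCfin.toFinset with hS'def
      have hsubF : hCfin.toFinset ⊆ S := by
        intro x hx
        rw [Set.Finite.mem_toFinset] at hx
        exact hCS hx
      have hsum' : ∑ x ∈ S', φ x = 0 := by
        have h := Finset.sum_sdiff (f := φ) hsubF
        rw [hCsum, add_zero] at h
        rw [hS'def, h, hsum]
      have hS'set : (↑S' : Set α) = ↑S \ C := by
        rw [hS'def, Finset.coe_sdiff, Set.Finite.coe_toFinset]
      have hunion : (↑S : Set α) ∩ T = ((↑S' : Set α) ∩ T) ∪ (C ∩ T) := by
        rw [hS'set, ← Set.union_inter_distrib_right, Set.diff_union_of_subset hCS]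
      have hdisj : Disjoint ((↑S' : Set α) ∩ T) (C ∩ T) := by
        rw [hS'set]
        exact Set.disjoint_of_subset Set.inter_subset_left Set.inter_subset_left
          Set.disjoint_sdiff_left
      have hcard : ((↑S : Set α) ∩ T).ncard
          = ((↑S' : Set α) ∩ T).ncard + (C ∩ T).ncard := by
        rw [hunion]
        exact Set.ncard_union_eq hdisj (S'.finite_toSet.inter_of_left T)
          (hCfin.inter_of_left T)
      have hodd' : Odd (((↑S' : Set α) ∩ T).ncard) := by
        rw [hcard, Nat.odd_add] at hodd
        exact hodd.mpr (Nat.not_odd_iff_even.mp hCodd)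
      have hS'ne : S'.Nonempty := by
        rcases hodd' with ⟨k, hk⟩
        have hne' : ((↑S' : Set α) ∩ T).Nonempty :=
          Set.nonempty_of_ncard_ne_zero (by omega)
        obtain ⟨x, hx⟩ := hne'
        exact ⟨x, Finset.mem_coe.mp hx.1⟩
      have hlt : S'.card < S.card := by
        apply Finset.card_lt_card
        apply Finset.sdiff_ssubset hsubF
        obtain ⟨y, hy⟩ := hCne
        exact ⟨y, hCfin.mem_toFinset.mpr hy⟩
      obtain ⟨C', hC'S', hC', hC'odd⟩ := ih S' (by omega)
        ((Finset.coe_subset.mpr (Finset.sdiff_subset)).trans hE) hS'ne hsum' hodd'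
      exact ⟨C', hC'S'.trans (Finset.coe_subset.mpr Finset.sdiff_subset), hC', hC'odd⟩

end Helpers2


section Helpers3

variable {V : Type*} [AddCommGroup V] [Module (ZMod 2) V]

private lemma span_mem_exists_finset {f : α → V} {A : Set α} {m : V}
    (h : m ∈ span (ZMod 2) (f '' A)) :
    ∃ S : Finset α, ↑S ⊆ A ∧ ∑ x ∈ S, f x = m := by
  classical
  rw [mem_span_set] at h
  obtain ⟨c, hsupp, hsum⟩ := h
  by_cases hce : c.support = ∅
  · refine ⟨∅, by simp, ?_⟩
    rw [Finset.sum_empty, ← hsum, Finsupp.sum, hce, Finset.sum_empty]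
  · obtain ⟨v0, hv0⟩ := Finset.nonempty_of_ne_empty hce
    obtain ⟨x0, hx0A, hx0⟩ := hsupp hv0
    have hch : ∀ v : V, ∃ x : α, v ∈ c.support → (x ∈ A ∧ f x = v) := by
      intro v
      by_cases hv : v ∈ c.support
      · obtain ⟨x, hxA, hfx⟩ := hsupp hv
        exact ⟨x, fun _ => ⟨hxA, hfx⟩⟩
      · exact ⟨x0, fun hc' => absurd hc' hv⟩
    choose g hg using hch
    refine ⟨c.support.image g, ?_, ?_⟩
    · intro x hx
      simp only [Finset.coe_image, Set.mem_image, Finset.mem_coe] at hx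
      obtain ⟨v, hv, rfl⟩ := hx
      exact (hg v hv).1
    · rw [Finset.sum_image (by
        intro x hx y hy hxy
        rw [← (hg x hx).2, ← (hg y hy).2, hxy])]
      rw [← hsum, Finsupp.sum]
      apply Finset.sum_congr rfl
      intro v hv
      rcases zmod2_cases (c v) with h0 | h1
      · exact absurd h0 (Finsupp.mem_support_iff.mp hv)
      · rw [(hg v hv).2, h1, one_smul]

private lemma sum_mem_span {f : α → V} {A : Set α} {S : Finset α} (hS : ↑S ⊆ A) :
    ∑ x ∈ S, f x ∈ span (ZMod 2) (f '' A) :=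
  Submodule.sum_mem _ (fun x hx => subset_span ⟨x, hS hx, rfl⟩)

end Helpers3

section Helpers4

variable {W : Type*} [AddCommGroup W] [Module (ZMod 2) W]

private lemma sum_splitRep (φ : α → W) (T : Set α) (a : α) (S : Finset α)
    (hS : ∀ x ∈ S, x ≠ a) :
    ∑ x ∈ S, splitRep φ T a x
      = (∑ x ∈ S, φ x, ((((↑S : Set α) ∩ T).ncard : ZMod 2))) := by
  classical
  have h1 : ∀ x ∈ S, splitRep φ T a x = (φ x, if x ∈ T then (1 : ZMod 2) else 0) := by
    intro x hx
    simp only [splitRep, if_neg (hS x hx)]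
  rw [Finset.sum_congr rfl h1]
  apply Prod.ext
  · rw [Prod.fst_sum]
  · rw [Prod.snd_sum]
    simp only
    rw [Finset.sum_boole]
    congr 1
    have : (↑S : Set α) ∩ T = ↑(S.filter (fun x => x ∈ T)) := by
      ext x
      simp [Set.mem_inter_iff]
    rw [this, Set.ncard_coe_finset]

end Helpers4


section Helpers5

variable {W : Type*} [AddCommGroup W] [Module (ZMod 2) W]

private lemma mrank_eq_finrank {M : Matroid α} {φ : α → W} (hM : IsRep M φ) {A : Set α}
    (hA : A ⊆ M.E) (hAfin : A.Finite) :
    mrank M A = finrank (ZMod 2) (span (ZMod 2) (φ '' A)) := by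
  classical
  set d := finrank (ZMod 2) (span (ZMod 2) (φ '' A)) with hd
  have himfin : (φ '' A).Finite := hAfin.image φ
  haveI hfd : FiniteDimensional (ZMod 2) (span (ZMod 2) (φ '' A)) :=
    FiniteDimensional.span_of_finite _ himfin
  have hub : ∀ n ∈ {n | ∃ I, M.Indep I ∧ I ⊆ A ∧ I.ncard = n}, n ≤ d := by
    rintro n ⟨I, hI, hIA, rfl⟩
    have hIfin : I.Finite := hAfin.subset hIA
    have hli : LinearIndependent (ZMod 2) (I.restrict φ) := ((hM I).1 hI).2
    have hinj : Set.InjOn φ I := by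
      intro x hx y hy hxy
      have := hli.injective (a₁ := ⟨x, hx⟩) (a₂ := ⟨y, hy⟩) hxy
      exact Subtype.ext_iff.mp this
    have himg : LinearIndependent (ZMod 2) ((↑) : φ '' I → W) := by
      have := LinearIndepOn.id_image (R := ZMod 2) (v := φ) (s := I) hli; exact this
    rw [← Set.ncard_image_of_injOn hinj]
    haveI : Fintype (φ '' I) := (hIfin.image φ).fintype
    rw [Set.ncard_eq_toFinset_card' (φ '' I), ← finrank_span_set_eq_card (s := φ '' I) himg]
    exact Submodule.finrank_mono (span_mono (Set.image_mono hIA))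
  have hdmem : d ∈ {n | ∃ I, M.Indep I ∧ I ⊆ A ∧ I.ncard = n} := by
    obtain ⟨b, hbsub, hbspan, hbli⟩ := exists_linearIndependent (ZMod 2) (φ '' A)
    have hbfin : b.Finite := himfin.subset hbsub
    have hdcard : d = b.ncard := by
      haveI : Fintype b := hbfin.fintype
      rw [hd, ← hbspan, finrank_span_set_eq_card (s := b) hbli, Set.ncard_eq_toFinset_card']
    rcases Set.eq_empty_or_nonempty b with hbe | ⟨v0, hv0⟩
    · refine ⟨∅, M.empty_indep, Set.empty_subset _, ?_⟩
      rw [hdcard, hbe]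
      simp
    · obtain ⟨xd, hxdA, hxd⟩ := hbsub hv0
      have hch : ∀ v : W, ∃ x : α, x ∈ A ∧ (v ∈ b → φ x = v) := by
        intro v
        by_cases hv : v ∈ b
        · obtain ⟨x, hxA, hfx⟩ := hbsub hv
          exact ⟨x, hxA, fun _ => hfx⟩
        · exact ⟨xd, hxdA, fun hc => absurd hc hv⟩
      choose g hgA hgb using hch
      refine ⟨g '' b, ?_, ?_, ?_⟩
      · rw [hM]
        constructor
        · intro x hx
          obtain ⟨v, hv, rfl⟩ := hx
          exact hA (hgA v)
        · have hmem : ∀ x : (g '' b : Set α), φ ↑x ∈ b := by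
            rintro ⟨x, v, hv, rfl⟩
            rw [hgb v hv]
            exact hv
          have heinj : Function.Injective (fun x : (g '' b : Set α) => (⟨φ ↑x, hmem x⟩ : b)) := by
            rintro ⟨x, hx⟩ ⟨y, hy⟩ hxy
            have h1 : φ x = φ y := Subtype.ext_iff.mp hxy
            obtain ⟨v, hv, rfl⟩ := hx
            obtain ⟨w, hw, rfl⟩ := hy
            rw [hgb v hv, hgb w hw] at h1
            exact Subtype.ext (by show g v = g w; rw [h1])
          have := hbli.comp _ heinj
          exact this
      · intro x hx
        obtain ⟨v, hv, rfl⟩ := hx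
        exact hgA v
      · rw [hdcard]
        apply Set.ncard_image_of_injOn
        intro v hv w hw hvw
        rw [← hgb v hv, ← hgb w hw, hvw]
  apply le_antisymm
  · exact csSup_le ⟨0, ⟨∅, M.empty_indep, Set.empty_subset _, by simp⟩⟩ hub
  · exact le_csSup ⟨d, hub⟩ hdmem

end Helpers5


/-- For A ⊆ E(M): if A contains a circuit of M meeting T in an odd number of elements then
the rank of A goes up by one in M'_T, and otherwise it is unchanged. -/
theorem eleSplit_rank_of_not_mem {α W : Type*} [AddCommGroup W] [Module (ZMod 2) W]
    (M N : Matroid α) (φ : α → W) (hM : IsRep M φ) (T : Set α) (hT : T ⊆ M.E)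
    (hfin : M.E.Finite) (a : α) (hN : IsEleSplit M φ T a N)
    (A : Set α) (hA : A ⊆ M.E) :
    ((∃ C ⊆ A, MCircuit M C ∧ Odd ((C ∩ T).ncard)) → mrank N A = mrank M A + 1) ∧
    ((¬ ∃ C ⊆ A, MCircuit M C ∧ Odd ((C ∩ T).ncard)) → mrank N A = mrank M A) := by
  obtain ⟨ha, hNE, hNrep⟩ := hN
  have hAfin : A.Finite := hfin.subset hA
  have hAN : A ⊆ N.E := by rw [hNE]; exact hA.trans (Set.subset_insert a M.E)
  have hVM : mrank M A = finrank (ZMod 2) (span (ZMod 2) (φ '' A)) :=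
    mrank_eq_finrank hM hA hAfin
  have hVN : mrank N A = finrank (ZMod 2) (span (ZMod 2) (splitRep φ T a '' A)) :=
    mrank_eq_finrank hNrep hAN hAfin
  have hane : ∀ x ∈ A, x ≠ a := fun x hx hxa => ha (hxa ▸ hA hx)
  have hkey : ((0 : W), (1 : ZMod 2)) ∈ span (ZMod 2) (splitRep φ T a '' A)
      ↔ ∃ C ⊆ A, MCircuit M C ∧ Odd ((C ∩ T).ncard) := by
    constructor
    · intro h
      obtain ⟨S, hSA, hsum⟩ := span_mem_exists_finset h
      have hsum2 := sum_splitRep φ T a S (fun x hx => hane x (hSA hx))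
      rw [hsum2, Prod.mk.injEq] at hsum
      have hoddS : Odd (((↑S : Set α) ∩ T).ncard) := (odd_iff_cast_eq_one _).2 hsum.2
      have hSne : S.Nonempty := by
        by_contra hc
        rw [Finset.not_nonempty_iff_eq_empty] at hc
        subst hc
        simp [Nat.odd_iff] at hoddS
      obtain ⟨C, hCS, hC, hCodd⟩ :=
        exists_odd_circuit hM T S.card S le_rfl (hSA.trans hA) hSne hsum.1 hoddS
      exact ⟨C, hCS.trans hSA, hC, hCodd⟩
    · rintro ⟨C, hCA, hC, hCodd⟩
      have hCfin : C.Finite := hAfin.subset hCA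
      have h0 := circuit_sum_zero hM hC hCfin
      have hsubA : ↑hCfin.toFinset ⊆ A := by rw [hCfin.coe_toFinset]; exact hCA
      have hmem := sum_mem_span (f := splitRep φ T a) hsubA
      have hsum2 := sum_splitRep φ T a hCfin.toFinset (fun x hx => hane x (hsubA hx))
      rw [hCfin.coe_toFinset] at hsum2
      rw [hsum2, h0, (odd_iff_cast_eq_one _).1 hCodd] at hmem
      exact hmem
  haveI hfdV' : FiniteDimensional (ZMod 2) (span (ZMod 2) (splitRep φ T a '' A)) :=
    FiniteDimensional.span_of_finite _ (hAfin.image _)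
  set π : W × ZMod 2 →ₗ[ZMod 2] W := LinearMap.fst (ZMod 2) W (ZMod 2) with hπ
  have himg : π '' (splitRep φ T a '' A) = φ '' A := by
    rw [Set.image_image]
    apply Set.image_congr
    intro x hx
    simp [hπ, splitRep, hane x hx]
  set f := π.comp (span (ZMod 2) (splitRep φ T a '' A)).subtype with hfdef
  have hrange : LinearMap.range f = span (ZMod 2) (φ '' A) := by
    rw [hfdef, LinearMap.range_comp, Submodule.range_subtype, Submodule.map_span, himg]
  have hrn := LinearMap.finrank_range_add_finrank_ker f
  rw [hrange] at hrn
  constructor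
  · intro hex
    have h01 : ((0 : W), (1 : ZMod 2)) ∈ span (ZMod 2) (splitRep φ T a '' A) := hkey.2 hex
    have hker : LinearMap.ker f
        = span (ZMod 2) {(⟨((0 : W), (1 : ZMod 2)), h01⟩ :
            span (ZMod 2) (splitRep φ T a '' A))} := by
      apply le_antisymm
      · rintro ⟨v, hv⟩ hvk
        rw [LinearMap.mem_ker] at hvk
        have hv1 : v.1 = 0 := hvk
        rw [Submodule.mem_span_singleton]
        refine ⟨v.2, ?_⟩
        apply Subtype.ext
        show v.2 • ((0 : W), (1 : ZMod 2)) = v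
        rw [Prod.ext_iff]
        refine ⟨by simpa using hv1.symm, by simp⟩
      · rw [Submodule.span_singleton_le_iff_mem, LinearMap.mem_ker]
        rfl
    have hker1 : finrank (ZMod 2) (LinearMap.ker f) = 1 := by
      rw [hker]
      apply finrank_span_singleton
      intro hc
      have h2 := Subtype.ext_iff.mp hc
      rw [Prod.ext_iff] at h2
      exact one_ne_zero h2.2
    rw [hVN, hVM, ← hrn, hker1]
  · intro hnex
    have h01 : ((0 : W), (1 : ZMod 2)) ∉ span (ZMod 2) (splitRep φ T a '' A) :=
      fun h => hnex (hkey.1 h)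
    have hker : LinearMap.ker f = ⊥ := by
      rw [eq_bot_iff]
      rintro ⟨v, hv⟩ hvk
      rw [LinearMap.mem_ker] at hvk
      have hv1 : v.1 = 0 := hvk
      rw [Submodule.mem_bot]
      rcases zmod2_cases v.2 with h2 | h2
      · exact Subtype.ext (by rw [Prod.ext_iff]; exact ⟨hv1, h2⟩)
      · exfalso
        apply h01
        have hveq : v = ((0 : W), (1 : ZMod 2)) := by rw [Prod.ext_iff]; exact ⟨hv1, h2⟩
        rwa [← hveq]
    rw [hVN, hVM, ← hrn, hker, finrank_bot, add_zero]
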